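/- Let k ≥ 2 be an even integer and n an integer with n ≥ (k² + 2k)/8 + 1. Then the sequence in Z_n consisting of the elements −(k−2)/2, …, −1 each with multiplicity 1, the element 0 with multiplicity n − (k²+2k)/8, the element 1 with multiplicity n − (k²+2k)/8, and the elements 2, …, k/2 each with multiplicity 1, is an n-zero-free sequence of length 2n − 2 − ⌊((k−1)/2)²⌋ containing exactly k distinct elements. -/

import Mathlib

open Multiset

/-- `γ` is `n`-zero-free: it has no subsequence of length `n` with sum zero. -/
def NZeroFree {n : ℕ} (γ : Multiset (ZMod n)) : Prop :=
  ∀ σ ≤ γ, Multiset.card σ = n → σ.sum ≠ 0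

lemma exists_le_map {α β : Type*} [DecidableEq α] [DecidableEq β] {f : α → β}
    {s : Multiset α} {σ : Multiset β} (h : σ ≤ s.map f) :
    ∃ u ≤ s, σ = u.map f := by
  induction σ using Multiset.induction_on generalizing s with
  | empty => exact ⟨0, Multiset.zero_le _, rfl⟩
  | cons a σ ih =>
    have ha : a ∈ s.map f := Multiset.mem_of_le h (Multiset.mem_cons_self _ _)
    obtain ⟨b, hb, rfl⟩ := Multiset.mem_map.mp ha
    have h2 : σ ≤ (s.erase b).map f := by
      rw [Multiset.map_erase_of_mem f s hb]
      simpa using Multiset.erase_le_erase (f b) h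
    obtain ⟨u, hu, rfl⟩ := ih h2
    refine ⟨b ::ₘ u, ?_, by rw [Multiset.map_cons]⟩
    rw [← Multiset.cons_erase hb]
    exact Multiset.cons_le_cons _ hu

lemma exists_le_add {α : Type*} [DecidableEq α] {t u v : Multiset α} (h : t ≤ u + v) :
    ∃ a b, a ≤ u ∧ b ≤ v ∧ t = a + b := by
  refine ⟨t ∩ u, t - u, Multiset.inter_le_right, ?_, ?_⟩
  · exact Multiset.sub_le_iff_le_add.mpr (h.trans (le_of_eq (add_comm u v)))
  · ext a
    rw [Multiset.count_add, Multiset.count_inter, Multiset.count_sub]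
    omega

lemma gauss_int (N : ℕ) : (∑ i ∈ Finset.range N, ((i : ℤ) + 2)) * 2 = N * (N + 3) := by
  induction N with
  | zero => simp
  | succ d ih =>
    rw [Finset.sum_range_succ]
    push_cast
    linear_combination ih

lemma sum_map_mono {S R : Multiset ℕ} (h : S ≤ R) {f : ℕ → ℤ} (hf : ∀ i, 0 ≤ f i) :
    (S.map f).sum ≤ (R.map f).sum := by
  obtain ⟨u, rfl⟩ := Multiset.le_iff_exists_add.mp h
  rw [Multiset.map_add, Multiset.sum_add]
  have h0 : 0 ≤ (u.map f).sum := Multiset.sum_nonneg (by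
    intro x hx
    obtain ⟨i, _, rfl⟩ := Multiset.mem_map.mp hx
    exact hf i)
  linarith

/-- sum of constants 1 -/
lemma sum_map_one (S : Multiset ℕ) : (S.map (fun _ : ℕ => (1 : ℤ))).sum = Multiset.card S := by
  rw [Multiset.map_const', Multiset.sum_replicate]
  simp

theorem even_k_example (k n : ℕ) (hk : 2 ≤ k) (hke : Even k)
    (hn : (k ^ 2 + 2 * k) / 8 + 1 ≤ n) :
    NZeroFree
      (Multiset.replicate (n - (k ^ 2 + 2 * k) / 8) (0 : ZMod n) +
       Multiset.replicate (n - (k ^ 2 + 2 * k) / 8) (1 : ZMod n) +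
       (Multiset.range ((k - 2) / 2)).map (fun i => -((i : ZMod n) + 1)) +
       (Multiset.range (k / 2 - 1)).map (fun i => (i : ZMod n) + 2)) ∧
    Multiset.card
      (Multiset.replicate (n - (k ^ 2 + 2 * k) / 8) (0 : ZMod n) +
       Multiset.replicate (n - (k ^ 2 + 2 * k) / 8) (1 : ZMod n) +
       (Multiset.range ((k - 2) / 2)).map (fun i => -((i : ZMod n) + 1)) +
       (Multiset.range (k / 2 - 1)).map (fun i => (i : ZMod n) + 2)) =
      2 * n - 2 - (k - 1) ^ 2 / 4 ∧
    (Multiset.replicate (n - (k ^ 2 + 2 * k) / 8) (0 : ZMod n) +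
       Multiset.replicate (n - (k ^ 2 + 2 * k) / 8) (1 : ZMod n) +
       (Multiset.range ((k - 2) / 2)).map (fun i => -((i : ZMod n) + 1)) +
       (Multiset.range (k / 2 - 1)).map (fun i => (i : ZMod n) + 2)).toFinset.card = k := by
  obtain ⟨m, rfl⟩ := hke
  obtain ⟨q, rfl⟩ : ∃ q, m = q + 1 := ⟨m - 1, by omega⟩
  obtain ⟨j, hj⟩ := Nat.even_mul_succ_self (q + 1)
  have hexp : (q + 1) * (q + 1 + 1) = q * q + 3 * q + 2 := by ring
  have hT : ((q + 1 + (q + 1)) ^ 2 + 2 * (q + 1 + (q + 1))) / 8 = j := by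
    have h1 : (q + 1 + (q + 1)) ^ 2 + 2 * (q + 1 + (q + 1)) = 4 * ((q + 1) * (q + 1 + 1)) := by
      ring
    rw [h1, hj]
    omega
  have hqq : q ≤ q * q := by nlinarith
  rw [hT] at hn
  rw [hT, show (q + 1 + (q + 1) - 2) / 2 = q from by omega,
    show (q + 1 + (q + 1)) / 2 - 1 = q from by omega]
  -- facts
  have hjq : j + j = q * q + 3 * q + 2 := by omega
  have hnq : 2 * q + 2 ≤ n := by omega
  haveI : NeZero n := ⟨by omega⟩
  set negZ : ℕ → ℤ := fun i => -((i : ℤ) + 1) with hnegZ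
  set posZ : ℕ → ℤ := fun i => (i : ℤ) + 2 with hposZ
  set γZ : Multiset ℤ := Multiset.replicate (n - j) 0 + Multiset.replicate (n - j) 1 +
      (Multiset.range q).map negZ + (Multiset.range q).map posZ with hγZ
  have hγ : Multiset.replicate (n - j) (0 : ZMod n) + Multiset.replicate (n - j) (1 : ZMod n) +
      (Multiset.range q).map (fun i => -((i : ZMod n) + 1)) +
      (Multiset.range q).map (fun i => (i : ZMod n) + 2) =
      γZ.map (fun x : ℤ => (x : ZMod n)) := by
    rw [hγZ]
    simp only [Multiset.map_add, Multiset.map_replicate, Multiset.map_map, Function.comp,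
      hnegZ, hposZ]
    push_cast
    simp [Multiset.map_map, Function.comp]
  -- full positive sum
  have hfullsum : ((Multiset.range q).map posZ).sum = (j : ℤ) - 1 := by
    have hconv : ((Multiset.range q).map posZ).sum = ∑ i ∈ Finset.range q, ((i : ℤ) + 2) := rfl
    have hg := gauss_int q
    have hcast : (j : ℤ) + j = q * q + 3 * q + 2 := by exact_mod_cast congrArg Nat.cast hjq
    push_cast at hcast
    rw [hconv]
    nlinarith [hg, hcast]
  refine ⟨?_, ?_, ?_⟩
  · -- NZeroFree
    intro σ hσ hcard hsum
    rw [hγ] at hσ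
    obtain ⟨t, htle, rfl⟩ := exists_le_map hσ
    rw [Multiset.card_map] at hcard
    have hcast : (t.map (fun x : ℤ => (x : ZMod n))).sum = ((t.sum : ℤ) : ZMod n) := by
      simpa using (map_multiset_sum (Int.castRingHom (ZMod n)) t).symm
    have hdvd : (n : ℤ) ∣ t.sum := by
      rw [← ZMod.intCast_zmod_eq_zero_iff_dvd]
      rw [← hcast]
      exact hsum
    obtain ⟨t', t3, h', h3, rfl⟩ := exists_le_add htle
    obtain ⟨t'', t2, h'', h2, rfl⟩ := exists_le_add h'
    obtain ⟨t0, t1, h0, h1, rfl⟩ := exists_le_add h''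
    obtain ⟨c0, hc0, rfl⟩ := Multiset.le_replicate_iff.mp h0
    obtain ⟨b, hb, rfl⟩ := Multiset.le_replicate_iff.mp h1
    obtain ⟨S, hS, rfl⟩ := exists_le_map h2
    obtain ⟨P, hP, rfl⟩ := exists_le_map h3
    simp only [Multiset.card_add, Multiset.card_replicate, Multiset.card_map] at hcard
    -- sums
    have hts : (Multiset.replicate c0 (0 : ℤ) + Multiset.replicate b 1 + S.map negZ +
        P.map posZ).sum = (b : ℤ) + (S.map negZ).sum + (P.map posZ).sum := by
      simp only [Multiset.sum_add, Multiset.sum_replicate, smul_zero, nsmul_eq_mul, mul_one]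
      ring
    have hposnn : ∀ i, (0 : ℤ) ≤ posZ i := by intro i; simp only [hposZ]; omega
    have hSpos_le : (S.map posZ).sum ≤ (j : ℤ) - 1 := by
      have := sum_map_mono hS hposnn
      linarith [hfullsum]
    have hPpos_le : (P.map posZ).sum ≤ (j : ℤ) - 1 := by
      have := sum_map_mono hP hposnn
      linarith [hfullsum]
    have hrelS : (Multiset.card S : ℤ) - (S.map negZ).sum = (S.map posZ).sum := by
      have h1 : (S.map posZ).sum + (S.map negZ).sum
          = (S.map (fun i => posZ i + negZ i)).sum := by
        conv_rhs => rw [Multiset.sum_map_add]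
      have h2 : (S.map (fun i => posZ i + negZ i)).sum = (Multiset.card S : ℤ) := by
        have : (fun i : ℕ => posZ i + negZ i) = fun _ : ℕ => (1 : ℤ) := by
          funext i; simp only [hposZ, hnegZ]; ring
        rw [this, sum_map_one]
      linarith
    have hneg_le0 : (S.map negZ).sum ≤ 0 := by
      have h1 : (S.map negZ).sum ≤ (S.map (fun _ : ℕ => (0 : ℤ))).sum := by
        apply Multiset.sum_map_le_sum_map
        intro i _
        simp only [hnegZ]
        omega
      have h2 : (S.map (fun _ : ℕ => (0 : ℤ))).sum = 0 := by
        rw [Multiset.map_const', Multiset.sum_replicate]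
        simp
      linarith
    have hcardP_le : (Multiset.card P : ℤ) ≤ (P.map posZ).sum := by
      have h1 : (P.map (fun _ : ℕ => (1 : ℤ))).sum ≤ (P.map posZ).sum := by
        apply Multiset.sum_map_le_sum_map
        intro i _
        simp only [hposZ]
        omega
      rw [sum_map_one] at h1
      exact h1
    have hPpos_nn : (0 : ℤ) ≤ (P.map posZ).sum := le_trans (by positivity) hcardP_le
    have hj1 : 1 ≤ j := by omega
    have hbZ : (b : ℤ) ≤ (n : ℤ) - j := by
      have : (j : ℤ) + 1 ≤ n := by exact_mod_cast hn
      have hb' : (b : ℤ) ≤ ((n - j : ℕ) : ℤ) := by exact_mod_cast hb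
      push_cast [Nat.cast_sub (by omega : j ≤ n)] at hb'
      linarith
    have htsum0 : (Multiset.replicate c0 (0 : ℤ) + Multiset.replicate b 1 + S.map negZ +
        P.map posZ).sum = 0 := by
      set s := (Multiset.replicate c0 (0 : ℤ) + Multiset.replicate b 1 + S.map negZ +
        P.map posZ).sum with hsdef
      have hnpos : (0 : ℤ) < n := by exact_mod_cast (by omega : 0 < n)
      have hup : s ≤ (n : ℤ) - 1 := by
        rw [hts]
        have hjn : (j : ℤ) ≤ (n : ℤ) - 1 := by
          have : (j : ℤ) + 1 ≤ n := by exact_mod_cast hn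
          linarith
        linarith
      have hlo : -(n : ℤ) < s := by
        rw [hts]
        have hSneg_ge : -((j : ℤ) - 1) ≤ (S.map negZ).sum := by
          have : (Multiset.card S : ℤ) ≥ 0 := by positivity
          linarith [hrelS, hSpos_le]
        have hjn : (j : ℤ) ≤ (n : ℤ) - 1 := by
          have : (j : ℤ) + 1 ≤ n := by exact_mod_cast hn
          linarith
        have hb0 : (0 : ℤ) ≤ b := by positivity
        linarith
      obtain ⟨c, hc⟩ := hdvd
      have hc0' : c = 0 := by
        rcases lt_trichotomy c 0 with h | h | h
        · have : (n : ℤ) * c ≤ (n : ℤ) * (-1) := by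
            apply mul_le_mul_of_nonneg_left (by omega) (le_of_lt hnpos)
          rw [← hc] at this
          linarith
        · exact h
        · have : (n : ℤ) * 1 ≤ (n : ℤ) * c := by
            apply mul_le_mul_of_nonneg_left (by omega) (le_of_lt hnpos)
          rw [← hc] at this
          linarith
      rw [hc, hc0', mul_zero]
    rw [hts] at htsum0
    -- final contradiction
    have hfin : (b : ℤ) + Multiset.card S + Multiset.card P ≤ (j : ℤ) - 1 := by
      have h1 : (Multiset.card S : ℤ) - (S.map negZ).sum ≤ (j : ℤ) - 1 := by
        rw [hrelS]; exact hSpos_le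
      have h2 : (Multiset.card P : ℤ) - (P.map posZ).sum ≤ 0 := by linarith
      linarith
    omega
  · -- card
    rw [hγ, hγZ]
    simp only [Multiset.card_map, Multiset.card_add, Multiset.card_replicate,
      Multiset.card_range]
    rw [show q + 1 + (q + 1) - 1 = 2 * q + 1 from by omega,
      show (2 * q + 1) ^ 2 = 4 * (q * q) + 4 * q + 1 from by ring]
    omega
  · -- toFinset card
    rw [hγ, hγZ]
    have hA : n - j ≠ 0 := by omega
    have hrange : (Multiset.range q).toFinset = Finset.range q := by
      ext x
      simp
    rw [Multiset.map_add, Multiset.map_add, Multiset.map_add, Multiset.map_replicate,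
      Multiset.map_replicate, Multiset.map_map, Multiset.map_map]
    rw [Multiset.toFinset_add, Multiset.toFinset_add, Multiset.toFinset_add,
      Multiset.toFinset_map, Multiset.toFinset_map, hrange,
      Multiset.toFinset_replicate, Multiset.toFinset_replicate, if_neg hA, if_neg hA]
    simp only [Int.cast_zero, Int.cast_one]
    have himg : ({(0 : ZMod n)} ∪ {(1 : ZMod n)} ∪
        Finset.image ((fun x : ℤ => (x : ZMod n)) ∘ negZ) (Finset.range q) ∪
        Finset.image ((fun x : ℤ => (x : ZMod n)) ∘ posZ) (Finset.range q)) =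
        Finset.image (fun i : ℕ => (i : ZMod n) - (q : ZMod n))
          (Finset.range (2 * q + 2)) := by
      ext x
      simp only [Finset.mem_union, Finset.mem_singleton, Finset.mem_image, Finset.mem_range,
        Function.comp, hnegZ, hposZ]
      push_cast
      constructor
      · rintro (((rfl | rfl) | ⟨i, hi, rfl⟩) | ⟨i, hi, rfl⟩)
        · exact ⟨q, by omega, by simp⟩
        · refine ⟨q + 1, by omega, ?_⟩
          push_cast
          ring
        · refine ⟨q - 1 - i, by omega, ?_⟩
          obtain ⟨w, hw⟩ : ∃ w, q - 1 - i = w := ⟨_, rfl⟩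
          rw [hw]
          have hnat : w + (i + 1) = q := by omega
          have hcast : ((w : ℕ) : ZMod n) + ((i : ZMod n) + 1) = (q : ZMod n) := by
            rw [← hnat]; push_cast; ring
          rw [← hcast]; ring
        · refine ⟨q + i + 2, by omega, ?_⟩
          push_cast
          ring
      · rintro ⟨i, hi, rfl⟩
        rcases lt_trichotomy i q with h | h | h
        · refine Or.inl (Or.inr ⟨q - 1 - i, by omega, ?_⟩)
          obtain ⟨w, hw⟩ : ∃ w, q - 1 - i = w := ⟨_, rfl⟩
          rw [hw]
          have hnat : i + (w + 1) = q := by omega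
          have hcast : (i : ZMod n) + (((w : ℕ) : ZMod n) + 1) = (q : ZMod n) := by
            rw [← hnat]; push_cast; ring
          rw [← hcast]; ring
        · subst h
          exact Or.inl (Or.inl (Or.inl (by simp)))
        · rcases eq_or_lt_of_le (Nat.succ_le_of_lt h) with h' | h'
          · refine Or.inl (Or.inl (Or.inr ?_))
            rw [← h']
            push_cast
            ring
          · refine Or.inr ⟨i - q - 2, by omega, ?_⟩
            obtain ⟨w, hw⟩ : ∃ w, i - q - 2 = w := ⟨_, rfl⟩
            rw [hw]
            have hnat : w + 2 + q = i := by omega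
            have hcast : ((w : ℕ) : ZMod n) + 2 + (q : ZMod n) = (i : ZMod n) := by
              rw [← hnat]; push_cast; ring
            rw [← hcast]; ring
    have hinj : Set.InjOn (fun i : ℕ => (i : ZMod n) - (q : ZMod n))
        (Finset.range (2 * q + 2)) := by
      intro i hi i' hi' h
      simp only [Finset.coe_range, Set.mem_Iio] at hi hi'
      have h2 : (i : ZMod n) = (i' : ZMod n) := by
        have := h
        simp only at this
        linear_combination this
      have h3 := congrArg ZMod.val h2
      rwa [ZMod.val_natCast_of_lt (by omega), ZMod.val_natCast_of_lt (by omega)] at h3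
    rw [himg, Finset.card_image_of_injOn hinj, Finset.card_range]
    omega
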